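/- Let A be a domain, p, q primes of A, and R the symbolic Rees algebra of p. Then q[t⁻¹,t] ∩ R = q[t⁻¹] ⊕ (p∩q)t ⊕ (p^(2)∩q)t² ⊕ ⋯ is the unique prime ideal of R lying over q[t⁻¹] in A[t⁻¹]. -/

import Mathlib

noncomputable section

open LaurentPolynomial

/-- The `n`-th symbolic power `p^(n) := pⁿA_p ∩ A` of a prime ideal `p`. -/
def symbolicPower (A : Type*) [CommRing A] (p : Ideal A) [p.IsPrime] (n : ℕ) : Ideal A :=
  Ideal.comap (algebraMap A (Localization.AtPrime p))
    (Ideal.map (algebraMap A (Localization.AtPrime p)) (p ^ n))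

/-- The symbolic Rees algebra `R := A[t⁻¹, pt, p^(2)t², …] = ⊕_{n∈ℤ} p^(n)tⁿ`,
as a subalgebra of the Laurent polynomial ring `A[t, t⁻¹]`. -/
def symbolicReesAlgebra (A : Type*) [CommRing A] (p : Ideal A) [p.IsPrime] :
    Subalgebra A (LaurentPolynomial A) :=
  Algebra.adjoin A
    ({T (-1)} ∪ ⋃ n : ℕ, (fun x => C x * T (n : ℤ)) '' (symbolicPower A p n : Set A))

namespace Statement12Aux

variable {A : Type*} [CommRing A]

lemma toLaurent_coeff (g : Polynomial A) (m : ℤ) :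
    (Polynomial.toLaurent g : LaurentPolynomial A).coeff m
      = if 0 ≤ m then g.coeff m.toNat else 0 := by
  rw [coeff_toLaurent]
  split_ifs with h
  · conv_lhs => rw [show m = ((m.toNat : ℕ) : ℤ) from (Int.toNat_of_nonneg h).symm]
    exact Finsupp.mapDomain_apply Nat.castEmbedding.injective g.toFinsupp.coeff m.toNat
  · refine Finsupp.mapDomain_notin_range _ _ ?_
    rintro ⟨k, rfl⟩
    exact h (Int.natCast_nonneg k)

lemma aeval_T_neg_one (g : Polynomial A) :
    (Polynomial.aeval (T (-1) : LaurentPolynomial A) g : LaurentPolynomial A)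
      = invert (Polynomial.toLaurent g) := by
  have h : (Polynomial.aeval (T (-1) : LaurentPolynomial A) : Polynomial A →ₐ[A] _)
      = (invert (R := A)).toAlgHom.comp Polynomial.toLaurentAlg := by
    apply Polynomial.algHom_ext
    rw [Polynomial.aeval_X, AlgHom.comp_apply]
    show _ = invert (Polynomial.toLaurentAlg Polynomial.X)
    rw [Polynomial.coe_toLaurentAlg, Polynomial.toLaurent_X, invert_T]
  rw [h]
  rfl

lemma mul_T_apply (f : LaurentPolynomial A) (k m : ℤ) :
    (f * T k : LaurentPolynomial A).coeff m = f.coeff (m - k) := by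
  have := AddMonoidAlgebra.coeff_mul_single_apply (f : AddMonoidAlgebra A ℤ) (1 : A) k m
  rw [mul_one] at this
  exact this

variable (q : Ideal A)

/-- Coefficient-wise reduction mod `q`, as an `A`-algebra hom on Laurent polynomials. -/
def qmap : LaurentPolynomial A →ₐ[A] AddMonoidAlgebra (A ⧸ q) ℤ :=
  AddMonoidAlgebra.lift A _ ℤ
    { toFun := fun n => AddMonoidAlgebra.single (Multiplicative.toAdd n) 1
      map_one' := by
        rw [AddMonoidAlgebra.one_def]; rfl
      map_mul' := fun x y => by
        rw [AddMonoidAlgebra.single_mul_single, one_mul]; rfl }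

lemma qmap_single (a : ℤ) (b : A) :
    qmap q (AddMonoidAlgebra.single a b : AddMonoidAlgebra A ℤ)
      = AddMonoidAlgebra.single a (Ideal.Quotient.mk q b) := by
  rw [qmap, AddMonoidAlgebra.lift_single]
  show b • AddMonoidAlgebra.single a (1 : A ⧸ q) = _
  rw [AddMonoidAlgebra.smul_single, ← Algebra.algebraMap_eq_smul_one]
  rfl

lemma qmap_apply (f : LaurentPolynomial A) (m : ℤ) :
    (qmap q f).coeff m = Ideal.Quotient.mk q (f.coeff m) := by
  have : ∀ g : AddMonoidAlgebra A ℤ, (qmap q g).coeff m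
      = Ideal.Quotient.mk q (g.coeff m) := by
    intro g
    induction g using AddMonoidAlgebra.induction_linear with
    | zero => simp only [map_zero]; rfl
    | add f g hf hg =>
        rw [map_add]
        show (qmap q f).coeff m + (qmap q g).coeff m = _
        rw [hf, hg, AddMonoidAlgebra.coeff_add, Finsupp.add_apply, map_add]
    | single a b =>
        rw [qmap_single, AddMonoidAlgebra.coeff_single, AddMonoidAlgebra.coeff_single]
        rw [Finsupp.single_apply, Finsupp.single_apply, apply_ite (Ideal.Quotient.mk q),
          map_zero]
  exact this f

end Statement12Aux

open Statement12Aux in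
/-- Let `A` be a domain, `p, q` primes of `A`, and `R` the symbolic Rees algebra
of `p`. Then `q[t⁻¹,t] ∩ R = q[t⁻¹] ⊕ (p∩q)t ⊕ (p^(2)∩q)t² ⊕ ⋯` (the set of elements of `R`
all of whose coefficients lie in `q`) is the unique prime ideal of `R` lying over `q[t⁻¹]`
in `A[t⁻¹]`. -/
theorem statement12 (A : Type*) [CommRing A] [IsDomain A] (p q : Ideal A)
    [p.IsPrime] [q.IsPrime]
    (ti : ↥(symbolicReesAlgebra A p))
    (hti : (ti : LaurentPolynomial A) = T (-1))
    (Q : Ideal ↥(symbolicReesAlgebra A p))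
    (hQ : ∀ f : ↥(symbolicReesAlgebra A p),
      f ∈ Q ↔ ∀ n : ℤ, (f : LaurentPolynomial A).coeff n ∈ q) :
    Q.IsPrime ∧
    Ideal.comap (Polynomial.aeval ti : Polynomial A →ₐ[A] ↥(symbolicReesAlgebra A p)) Q =
      Ideal.map Polynomial.C q ∧
    (∀ P : Ideal ↥(symbolicReesAlgebra A p), P.IsPrime →
      Ideal.comap (Polynomial.aeval ti : Polynomial A →ₐ[A] ↥(symbolicReesAlgebra A p)) P =
        Ideal.map Polynomial.C q →
      P = Q) := by
  -- the underlying Laurent polynomial of `aeval ti g`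
  have hval : ∀ g : Polynomial A,
      ((Polynomial.aeval ti g : ↥(symbolicReesAlgebra A p)) : LaurentPolynomial A)
        = invert (Polynomial.toLaurent g) := by
    intro g
    have h1 : ((Polynomial.aeval ti g : ↥(symbolicReesAlgebra A p)) : LaurentPolynomial A)
        = Polynomial.aeval ((ti : LaurentPolynomial A)) g :=
      (Polynomial.aeval_algHom_apply (symbolicReesAlgebra A p).val ti g).symm
    rw [h1, hti, aeval_T_neg_one]
  -- Part 1 : Q is prime
  have hker : Q = RingHom.ker
      ((qmap q).toRingHom.comp (symbolicReesAlgebra A p).val.toRingHom) := by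
    ext f
    rw [hQ, RingHom.mem_ker]
    constructor
    · intro h
      ext m
      show (qmap q (f : LaurentPolynomial A)).coeff m = 0
      rw [qmap_apply, Ideal.Quotient.eq_zero_iff_mem]
      exact h m
    · intro h m
      have h2 : (qmap q (f : LaurentPolynomial A)).coeff m = 0 := by
        show (((qmap q).toRingHom.comp (symbolicReesAlgebra A p).val.toRingHom f
          : AddMonoidAlgebra (A ⧸ q) ℤ)).coeff m = 0
        rw [h]; rfl
      rw [qmap_apply] at h2
      exact Ideal.Quotient.eq_zero_iff_mem.mp h2
  haveI hdom : IsDomain (AddMonoidAlgebra (A ⧸ q) ℤ) := NoZeroDivisors.to_isDomain _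
  have hQprime : Q.IsPrime := by
    rw [hker]; exact RingHom.ker_isPrime _
  -- Part 2 : comap of Q is q[X]
  have hcomap : Ideal.comap (Polynomial.aeval ti :
      Polynomial A →ₐ[A] ↥(symbolicReesAlgebra A p)) Q = Ideal.map Polynomial.C q := by
    ext g
    rw [Ideal.mem_comap, hQ, Ideal.mem_map_C_iff]
    constructor
    · intro h k
      have h1 := h (-(k : ℤ))
      rw [hval] at h1
      have h2 : (invert (Polynomial.toLaurent g) : LaurentPolynomial A).coeff (-(k : ℤ))
          = (Polynomial.toLaurent g : LaurentPolynomial A).coeff (k : ℤ) := by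
        rw [invert_apply, neg_neg]
      rw [h2, toLaurent_coeff] at h1
      simpa using h1
    · intro h n
      rw [hval]
      have h2 : (invert (Polynomial.toLaurent g) : LaurentPolynomial A).coeff n
          = (Polynomial.toLaurent g : LaurentPolynomial A).coeff (-n) := invert_apply _ _
      rw [h2, toLaurent_coeff]
      split_ifs with hn
      · exact h _
      · exact q.zero_mem
  refine ⟨hQprime, hcomap, ?_⟩
  -- Part 3 : uniqueness
  intro P hP hPcomap
  -- ti ∉ P
  have hti_not : ti ∉ P := by
    intro h
    have hX : (Polynomial.X : Polynomial A) ∈ Ideal.comap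
        (Polynomial.aeval ti : Polynomial A →ₐ[A] ↥(symbolicReesAlgebra A p)) P := by
      rw [Ideal.mem_comap, Polynomial.aeval_X]; exact h
    rw [hPcomap, Ideal.mem_map_C_iff] at hX
    have h1 := hX 1
    rw [Polynomial.coeff_X_one] at h1
    exact ‹q.IsPrime›.ne_top (q.eq_top_of_isUnit_mem h1 isUnit_one)
  -- key decomposition : for f ∈ S, there are n, g with f * ti^n = aeval ti g
  have hkey : ∀ f : ↥(symbolicReesAlgebra A p), ∃ (n : ℕ) (g : Polynomial A),
      f * ti ^ n = Polynomial.aeval ti g ∧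
      (∀ k : ℕ, g.coeff k = (f : LaurentPolynomial A).coeff ((n : ℤ) - k)) := by
    intro f
    obtain ⟨n, g, hg⟩ := exists_T_pow (invert ((f : LaurentPolynomial A)))
    refine ⟨n, g, ?_, ?_⟩
    · apply Subtype.ext
      rw [hval]
      have h1 : invert (invert ((f : LaurentPolynomial A))) = (f : LaurentPolynomial A) :=
        involutive_invert _
      rw [hg, map_mul, h1, invert_T]
      have h3 : ((f * ti ^ n : ↥(symbolicReesAlgebra A p)) : LaurentPolynomial A)
          = (f : LaurentPolynomial A) * ((ti : LaurentPolynomial A)) ^ n := by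
        push_cast; ring
      rw [h3, hti, T_pow, show ((n : ℤ) * -1) = -(n : ℤ) by ring]
    · intro k
      have h1 : (Polynomial.toLaurent g : LaurentPolynomial A).coeff (k : ℤ)
          = g.coeff k := by
        rw [toLaurent_coeff]
        simp
      have h2 : (Polynomial.toLaurent g : LaurentPolynomial A).coeff (k : ℤ)
          = (invert ((f : LaurentPolynomial A)) * T (n : ℤ) : LaurentPolynomial A).coeff
            (k : ℤ) := by rw [hg]
      rw [← h1, h2, mul_T_apply, invert_apply, neg_sub]
  -- P ⊆ Q
  have hPQ : P ≤ Q := by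
    intro f hf
    obtain ⟨n, g, hfg, hcoeff⟩ := hkey f
    have hgP : g ∈ Ideal.comap (Polynomial.aeval ti :
        Polynomial A →ₐ[A] ↥(symbolicReesAlgebra A p)) P := by
      rw [Ideal.mem_comap, ← hfg]
      exact P.mul_mem_right _ hf
    rw [hPcomap, Ideal.mem_map_C_iff] at hgP
    rw [hQ]
    intro m
    -- coefficient of f at m
    have hfm : (f : LaurentPolynomial A).coeff m
        = ((f * ti ^ n : ↥(symbolicReesAlgebra A p)) : LaurentPolynomial A).coeff (m - n) := by
      have h3 : ((f * ti ^ n : ↥(symbolicReesAlgebra A p)) : LaurentPolynomial A)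
          = (f : LaurentPolynomial A) * ((ti : LaurentPolynomial A)) ^ n := by
        push_cast; ring
      rw [h3, hti, T_pow, show ((n : ℤ) * -1) = -(n : ℤ) by ring, mul_T_apply,
        sub_neg_eq_add]
      congr 1
      omega
    rw [hfm, hfg, hval]
    have h2 : (invert (Polynomial.toLaurent g) : LaurentPolynomial A).coeff (m - (n : ℤ))
        = (Polynomial.toLaurent g : LaurentPolynomial A).coeff (-(m - (n : ℤ))) :=
      invert_apply _ _
    rw [h2, toLaurent_coeff]
    split_ifs with hn
    · exact hgP _
    · exact q.zero_mem
  -- Q ⊆ P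
  have hQP : Q ≤ P := by
    intro f hf
    obtain ⟨n, g, hfg, hcoeff⟩ := hkey f
    have hgq : g ∈ Ideal.map (Polynomial.C : A →+* Polynomial A) q := by
      rw [Ideal.mem_map_C_iff]
      intro k
      rw [hcoeff k]
      exact (hQ f).mp hf _
    rw [← hPcomap, Ideal.mem_comap] at hgq
    rw [← hfg] at hgq
    rcases hP.mem_or_mem hgq with h | h
    · exact h
    · exact absurd (hP.mem_of_pow_mem n h) hti_not
  exact le_antisymm hPQ hQP
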